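/- arXiv:math-ph/0510089 — 4 statements merged into one kernel-verified Lean document; each statement's English description precedes it below -/
import Mathlib

section
/- Let d ≥ 1 and let a, c > 0. For every natural number N there exists a constant C_N > 0, depending only on d, a, c, N, such that for every t ∈ (0,1], every measurable function K : ℝ^d × ℝ^d → ℝ satisfying 0 ≤ K(x,y) ≤ c · t^{-d/2} · exp(−a‖x−y‖²) for all x, y, and all lattice points n, k ∈ ℤ^d, one has (∫_{Q_n} ∫_{Q_k} K(x,y)² dy dx)^{1/2} ≤ C_N · t^{-d/2} / (1 + ‖n−k‖^N). -/
open MeasureTheory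

/-- The closed unit cube centered at the lattice point `m`. -/
def unitCube (d : ℕ) (m : Fin d → ℤ) : Set (EuclideanSpace ℝ (Fin d)) :=
  {x | ∀ i, |x i - (m i : ℝ)| ≤ 1 / 2}

/-- The lattice point `m ∈ ℤ^d` viewed as a point of `ℝ^d`. -/
noncomputable def latt (d : ℕ) (m : Fin d → ℤ) : EuclideanSpace ℝ (Fin d) :=
  WithLp.toLp 2 (fun i => (m i : ℝ))

lemma unitCube_eq (d : ℕ) (m : Fin d → ℤ) :
    unitCube d m = ((MeasurableEquiv.toLp 2 (Fin d → ℝ)).symm) ⁻¹'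
      (Set.univ.pi fun i => Set.Icc ((m i : ℝ) - 1/2) ((m i : ℝ) + 1/2)) := by
  ext x
  simp only [unitCube, Set.mem_setOf_eq, Set.mem_preimage, Set.mem_pi, Set.mem_univ,
    Set.mem_Icc, forall_true_left, abs_le, MeasurableEquiv.coe_toLp_symm,
    MeasurableEquiv.coe_mk, Equiv.coe_fn_mk, MeasurableEquiv.toLp_symm_apply]
  constructor
  · intro h i
    constructor <;> [linarith [(h i).1]; linarith [(h i).2]]
  · intro h i
    constructor <;> [linarith [(h i).1]; linarith [(h i).2]]

lemma measurableSet_unitCube (d : ℕ) (m : Fin d → ℤ) :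
    MeasurableSet (unitCube d m) := by
  rw [unitCube_eq]
  exact ((MeasurableEquiv.toLp 2 (Fin d → ℝ)).symm).measurable
    (MeasurableSet.univ_pi fun i => measurableSet_Icc)

lemma volume_unitCube (d : ℕ) (m : Fin d → ℤ) : volume (unitCube d m) = 1 := by
  rw [unitCube_eq]
  have hmeas : MeasurableSet (Set.univ.pi fun i : Fin d =>
      Set.Icc ((m i : ℝ) - 1/2) ((m i : ℝ) + 1/2)) :=
    MeasurableSet.univ_pi fun i => measurableSet_Icc
  rw [(EuclideanSpace.volume_preserving_symm_measurableEquiv_toLp (Fin d)).measure_preimage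
    hmeas.nullMeasurableSet]
  rw [volume_pi_pi]
  simp only [Real.volume_Icc]
  norm_num

lemma norm_sub_latt_le {d : ℕ} {m : Fin d → ℤ} {x : EuclideanSpace ℝ (Fin d)}
    (hx : x ∈ unitCube d m) : ‖x - latt d m‖ ≤ Real.sqrt d / 2 := by
  have h1 : ‖x - latt d m‖ ≤ Real.sqrt ((d : ℝ) * (1/2)^2) := by
    rw [EuclideanSpace.norm_eq]
    apply Real.sqrt_le_sqrt
    calc ∑ i, ‖(x - latt d m) i‖ ^ 2 ≤ ∑ _i : Fin d, ((1:ℝ)/2)^2 := by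
          apply Finset.sum_le_sum
          intro i _
          have hcoord : (x - latt d m) i = x i - (m i : ℝ) := by simp [latt]
          rw [Real.norm_eq_abs, hcoord]
          exact pow_le_pow_left₀ (abs_nonneg _) (hx i) 2
      _ = (d : ℝ) * (1/2)^2 := by
          rw [Finset.sum_const, Finset.card_univ, Fintype.card_fin, nsmul_eq_mul]
  have h2 : Real.sqrt ((d : ℝ) * (1/2)^2) = Real.sqrt d / 2 := by
    rw [Real.sqrt_mul (Nat.cast_nonneg d), Real.sqrt_sq (by norm_num : (0:ℝ) ≤ 1/2)]
    ring
  linarith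

lemma poly_exp_bound (a : ℝ) (ha : 0 < a) (s : ℝ) (hs : 0 ≤ s) (N : ℕ) :
    ∃ C > (0:ℝ), ∀ r : ℝ, 0 ≤ r →
      (1 + r ^ N) * Real.exp (-(a * max (r - s) 0 ^ 2)) ≤ C := by
  rcases Nat.eq_zero_or_pos N with hN | hN
  · refine ⟨2, by norm_num, fun r hr => ?_⟩
    have hexp : Real.exp (-(a * max (r - s) 0 ^ 2)) ≤ 1 := by
      apply Real.exp_le_one_iff.mpr
      have : 0 ≤ a * max (r - s) 0 ^ 2 := by positivity
      linarith
    have hE : 0 < Real.exp (-(a * max (r - s) 0 ^ 2)) := Real.exp_pos _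
    subst hN
    simp only [pow_zero]
    nlinarith
  · set B : ℝ := 2*s + 2 with hB
    set b : ℝ := a / (4*N) with hb
    have hNpos : (0:ℝ) < N := by exact_mod_cast hN
    have hbpos : 0 < b := by positivity
    refine ⟨(1 + B^N) + 2/b^N, by positivity, fun r hr => ?_⟩
    have hBpos : (0:ℝ) < B := by positivity
    by_cases hrB : r ≤ B
    · have hexp : Real.exp (-(a * max (r - s) 0 ^ 2)) ≤ 1 := by
        apply Real.exp_le_one_iff.mpr
        have : 0 ≤ a * max (r - s) 0 ^ 2 := by positivity
        linarith
      have h1 : r ^ N ≤ B ^ N := pow_le_pow_left₀ hr hrB N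
      have h2 : (0:ℝ) < 1 + r ^ N := by positivity
      have h3 : (0:ℝ) < 2 / b^N := by positivity
      nlinarith
    · push_neg at hrB
      have hr1 : (1:ℝ) ≤ r := by linarith
      have hmax : max (r - s) 0 = r - s := max_eq_left (by linarith)
      have hhalf : r / 2 ≤ r - s := by linarith
      have hexp : Real.exp (-(a * max (r - s) 0 ^ 2)) ≤ Real.exp (-(a * (r/2)^2)) := by
        rw [hmax]
        apply Real.exp_le_exp.mpr
        have h2 : (r/2)^2 ≤ (r - s)^2 := by nlinarith
        nlinarith
      -- key exponential lower bound
      have hbr : b * r ≤ Real.exp (a * r^2 / (4*N)) := by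
        have h3 : b * r ≤ a * r^2 / (4*N) := by
          rw [hb]
          rw [div_mul_eq_mul_div, div_le_div_iff₀ (by positivity) (by positivity)]
          have hrr : 0 ≤ r^2 - r := by nlinarith
          nlinarith [mul_nonneg (mul_nonneg ha.le (by positivity : (0:ℝ) ≤ 4*(N:ℝ))) hrr]
        linarith [Real.add_one_le_exp (a * r^2 / (4*N))]
      have hNne : (N:ℝ) ≠ 0 := ne_of_gt hNpos
      have hpow : (b*r)^N ≤ Real.exp (a * (r/2)^2) := by
        have h4 := pow_le_pow_left₀ (by positivity) hbr N
        rwa [← Real.exp_nat_mul, show (N:ℝ) * (a * r^2 / (4*N)) = a * (r/2)^2 by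
          field_simp; ring] at h4
      set E := Real.exp (a * (r/2)^2) with hE
      have hEpos : 0 < E := Real.exp_pos _
      have hEinv : Real.exp (-(a * (r/2)^2)) = E⁻¹ := by
        rw [hE, ← Real.exp_neg]
      have hEinvpos : 0 < E⁻¹ := by positivity
      have h5 : r^N * b^N ≤ E := by
        calc r^N * b^N = (b*r)^N := by rw [← mul_pow]; ring_nf
          _ ≤ E := hpow
      have h6 : 1 ≤ r ^ N := by
        calc (1:ℝ) = 1^N := (one_pow N).symm
          _ ≤ r^N := pow_le_pow_left₀ (by norm_num) hr1 N
      have hEmul : E * E⁻¹ = 1 := mul_inv_cancel₀ (ne_of_gt hEpos)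
      have h7 : r^N * b^N * E⁻¹ ≤ 1 := by
        calc r^N * b^N * E⁻¹ ≤ E * E⁻¹ := by
              exact mul_le_mul_of_nonneg_right h5 (le_of_lt hEinvpos)
          _ = 1 := hEmul
      have hbN : (0:ℝ) < b^N := by positivity
      have h8 : r^N * E⁻¹ ≤ 1 / b^N := by
        rw [le_div_iff₀ hbN]
        calc r^N * E⁻¹ * b^N = r^N * b^N * E⁻¹ := by ring
          _ ≤ 1 := h7
      have h9 : (1 + r^N) * Real.exp (-(a * max (r - s) 0 ^ 2))
          ≤ (2 * r^N) * E⁻¹ := by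
        rw [← hEinv]
        apply mul_le_mul (by linarith) hexp (le_of_lt (Real.exp_pos _)) (by positivity)
      have h10 : (2 * r^N) * E⁻¹ ≤ 2 / b^N := by
        calc (2 * r^N) * E⁻¹ = 2 * (r^N * E⁻¹) := by ring
          _ ≤ 2 * (1 / b^N) := by linarith
          _ = 2 / b^N := by ring
      have hBN : (0:ℝ) < 1 + B^N := by positivity
      linarith

theorem stmt1 (d : ℕ) (hd : 1 ≤ d) (a c : ℝ) (ha : 0 < a) (hc : 0 < c) (N : ℕ) :
    ∃ C > (0 : ℝ),
      ∀ t : ℝ, t ∈ Set.Ioc (0 : ℝ) 1 →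
      ∀ K : EuclideanSpace ℝ (Fin d) × EuclideanSpace ℝ (Fin d) → ℝ,
        Measurable K →
        (∀ x y, 0 ≤ K (x, y) ∧
          K (x, y) ≤ c * t ^ (-(d : ℝ) / 2) * Real.exp (-a * ‖x - y‖ ^ 2)) →
        ∀ n k : Fin d → ℤ,
          Real.sqrt (∫ x in unitCube d n, ∫ y in unitCube d k, (K (x, y)) ^ 2)
            ≤ C * t ^ (-(d : ℝ) / 2) / (1 + ‖latt d n - latt d k‖ ^ N) := by
  obtain ⟨C₀, hC₀pos, hC₀⟩ := poly_exp_bound a ha (Real.sqrt d) (Real.sqrt_nonneg _) N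
  refine ⟨c * C₀, by positivity, ?_⟩
  rintro t ⟨ht0, ht1⟩ K hKm hKb n k
  set p : ℝ := t ^ (-(d:ℝ)/2) with hp
  have hppos : 0 < p := Real.rpow_pos_of_pos ht0 _
  set r := ‖latt d n - latt d k‖ with hr
  have hrpos : 0 ≤ r := norm_nonneg _
  set R := max (r - Real.sqrt d) 0 with hR
  have hR0 : 0 ≤ R := le_max_right _ _
  set M := c * p * Real.exp (-(a * R^2)) with hM
  have hM0 : 0 ≤ M := by positivity
  -- pointwise bound on K^2 on the cubes
  have hpt : ∀ x ∈ unitCube d n, ∀ y ∈ unitCube d k, K (x,y)^2 ≤ M^2 := by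
    intro x hx y hy
    have h1 : R ≤ ‖x - y‖ := by
      apply max_le _ (norm_nonneg _)
      have e1 : latt d n - latt d k = (latt d n - x) + (x - y) + (y - latt d k) := by abel
      have e2 : r ≤ ‖latt d n - x‖ + ‖x - y‖ + ‖y - latt d k‖ := by
        rw [hr, e1]
        exact (norm_add_le _ _).trans (add_le_add_left (norm_add_le _ _) _)
      have e3 : ‖latt d n - x‖ ≤ Real.sqrt d / 2 := by
        rw [norm_sub_rev]; exact norm_sub_latt_le hx
      have e4 : ‖y - latt d k‖ ≤ Real.sqrt d / 2 := norm_sub_latt_le hy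
      linarith
    have h2 : K (x,y) ≤ M := by
      have hub := (hKb x y).2
      have hE : Real.exp (-a * ‖x - y‖^2) ≤ Real.exp (-(a * R^2)) := by
        apply Real.exp_le_exp.mpr
        have hsq : R^2 ≤ ‖x - y‖^2 := pow_le_pow_left₀ hR0 h1 2
        nlinarith
      calc K (x,y) ≤ c * p * Real.exp (-a * ‖x-y‖^2) := hub
        _ ≤ M := by
            rw [hM]
            exact mul_le_mul_of_nonneg_left hE (by positivity)
    exact pow_le_pow_left₀ (hKb x y).1 h2 2
  have hcubek := volume_unitCube d k
  have hcuben := volume_unitCube d n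
  have hfin_k : volume (unitCube d k) < ⊤ := by rw [hcubek]; exact ENNReal.one_lt_top
  have hfin_n : volume (unitCube d n) < ⊤ := by rw [hcuben]; exact ENNReal.one_lt_top
  -- inner integral bound
  have hinner_le : ∀ x ∈ unitCube d n, ∫ y in unitCube d k, K (x,y)^2 ≤ M^2 := by
    intro x hx
    have hmeas : AEStronglyMeasurable (fun y => K (x,y)^2)
        (volume.restrict (unitCube d k)) :=
      ((hKm.comp measurable_prodMk_left).pow_const 2).aestronglyMeasurable
    have hb := norm_setIntegral_le_of_norm_le_const (C := M^2) (f := fun y => K (x,y)^2) hfin_k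
      (fun y hy => by
        rw [Real.norm_eq_abs, abs_of_nonneg (sq_nonneg _)]
        exact hpt x hx y hy)
    rw [measureReal_def, hcubek] at hb
    simp only [ENNReal.toReal_one, mul_one] at hb
    exact (le_abs_self _).trans hb
  have hinner_nonneg : ∀ x, 0 ≤ ∫ y in unitCube d k, K (x,y)^2 :=
    fun x => integral_nonneg (fun y => sq_nonneg _)
  -- outer integral bound
  have houter_meas : AEStronglyMeasurable (fun x => ∫ y in unitCube d k, K (x,y)^2)
      (volume.restrict (unitCube d n)) := by
    have hsm : StronglyMeasurable (fun z : EuclideanSpace ℝ (Fin d) ×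
        EuclideanSpace ℝ (Fin d) => K z ^ 2) :=
      (hKm.pow_const 2).stronglyMeasurable
    exact hsm.integral_prod_right'.aestronglyMeasurable
  have houter : ∫ x in unitCube d n, ∫ y in unitCube d k, K (x,y)^2 ≤ M^2 := by
    have hb := norm_setIntegral_le_of_norm_le_const (C := M^2) (f := fun x => ∫ y in unitCube d k, K (x,y)^2) hfin_n
      (fun x hx => by
        rw [Real.norm_eq_abs, abs_of_nonneg (hinner_nonneg x)]
        exact hinner_le x hx)
    rw [measureReal_def, hcuben] at hb
    simp only [ENNReal.toReal_one, mul_one] at hb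
    exact (le_abs_self _).trans hb
  have hsqrt : Real.sqrt (∫ x in unitCube d n, ∫ y in unitCube d k, K (x,y)^2) ≤ M := by
    calc Real.sqrt (∫ x in unitCube d n, ∫ y in unitCube d k, K (x,y)^2)
        ≤ Real.sqrt (M^2) := Real.sqrt_le_sqrt houter
      _ = M := Real.sqrt_sq hM0
  -- conclude
  have hkey := hC₀ r hrpos
  have h1r : (0:ℝ) < 1 + r^N := by positivity
  have hfinal : M ≤ c * C₀ * p / (1 + r^N) := by
    rw [le_div_iff₀ h1r, hM]
    have hEc : Real.exp (-(a * R^2)) * (1 + r^N) ≤ C₀ := by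
      have := hkey
      nlinarith [Real.exp_pos (-(a * R^2))]
    nlinarith [Real.exp_pos (-(a * R^2)), mul_pos hppos (mul_pos hc hC₀pos)]
  exact hsqrt.trans hfinal
end

section
/- Let E and F be linear subspaces of ℝ^d. There exists a constant C > 0 (depending on E and F) such that for every x ∈ ℝ^d one has dist(x, E ∩ F) ≤ C · ( dist(x, E) + dist(x, F) ). -/
open Metric

lemma proj_dist_le {d : ℕ} (U : Submodule ℝ (EuclideanSpace ℝ (Fin d)))
    (x : EuclideanSpace ℝ (Fin d)) :
    ‖x - (Submodule.orthogonalProjectionOnto U x : EuclideanSpace ℝ (Fin d))‖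
      ≤ Metric.infDist x (U : Set (EuclideanSpace ℝ (Fin d))) := by
  rw [Metric.infDist_eq_iInf, Submodule.coe_orthogonalProjectionOnto_apply, Submodule.starProjection_minimal]
  refine le_ciInf fun y => ?_
  rw [dist_eq_norm]
  exact ciInf_le ⟨0, Set.forall_mem_range.mpr fun _ => norm_nonneg _⟩ y

theorem stmt7 (d : ℕ) (E F : Submodule ℝ (EuclideanSpace ℝ (Fin d))) :
    ∃ C > (0 : ℝ), ∀ x : EuclideanSpace ℝ (Fin d),
      Metric.infDist x ((E ⊓ F : Submodule ℝ (EuclideanSpace ℝ (Fin d))) :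
          Set (EuclideanSpace ℝ (Fin d)))
        ≤ C * (Metric.infDist x (E : Set (EuclideanSpace ℝ (Fin d))) +
               Metric.infDist x (F : Set (EuclideanSpace ℝ (Fin d)))) := by
  classical
  set V := EuclideanSpace ℝ (Fin d)
  -- the maps x ↦ x - projE x and x ↦ x - projF x
  set PE : V →ₗ[ℝ] V :=
    LinearMap.id - E.subtype.comp (Submodule.orthogonalProjectionOnto E : V →L[ℝ] E).toLinearMap with hPE
  set PF : V →ₗ[ℝ] V :=
    LinearMap.id - F.subtype.comp (Submodule.orthogonalProjectionOnto F : V →L[ℝ] F).toLinearMap with hPF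
  have hPEapp : ∀ x : V, PE x = x - (Submodule.orthogonalProjectionOnto E x : V) := fun x => rfl
  have hPFapp : ∀ x : V, PF x = x - (Submodule.orthogonalProjectionOnto F x : V) := fun x => rfl
  set T : V →ₗ[ℝ] V × V := PE.prod PF with hT
  set W : Submodule ℝ V := (E ⊓ F)ᗮ with hW
  set S : W →ₗ[ℝ] V × V := T.comp W.subtype with hS
  have hker : LinearMap.ker S = ⊥ := by
    rw [LinearMap.ker_eq_bot']
    rintro ⟨w, hw⟩ h
    have h1 : PE w = 0 := congrArg Prod.fst h
    have h2 : PF w = 0 := congrArg Prod.snd h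
    rw [hPEapp, sub_eq_zero] at h1
    rw [hPFapp, sub_eq_zero] at h2
    have hwE : w ∈ E := by rw [← Submodule.starProjection_eq_self_iff]; exact h1.symm
    have hwF : w ∈ F := by rw [← Submodule.starProjection_eq_self_iff]; exact h2.symm
    have : w ∈ (E ⊓ F) ⊓ (E ⊓ F)ᗮ := ⟨⟨hwE, hwF⟩, hw⟩
    rw [Submodule.inf_orthogonal_eq_bot] at this
    exact Subtype.ext (by simpa using this)
  obtain ⟨K, K0, hK⟩ := S.exists_antilipschitzWith hker
  refine ⟨K, by exact_mod_cast K0, fun x => ?_⟩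
  set p : V := (Submodule.orthogonalProjectionOnto (E ⊓ F) x : V) with hp
  have hpmem : p ∈ E ⊓ F := (Submodule.orthogonalProjectionOnto (E ⊓ F) x).2
  have hwmem : x - p ∈ W := Submodule.sub_starProjection_mem_orthogonal x
  -- LHS bound
  have h1 : Metric.infDist x ((E ⊓ F : Submodule ℝ V) : Set V) ≤ ‖x - p‖ := by
    simpa [dist_eq_norm] using Metric.infDist_le_dist_of_mem (x := x) hpmem
  -- antilipschitz bound
  have h2 : ‖x - p‖ ≤ (K : ℝ) * ‖S ⟨x - p, hwmem⟩‖ := by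
    have := hK.le_mul_dist (⟨x - p, hwmem⟩ : W) 0
    simpa [dist_eq_norm, map_zero] using this
  -- T kills p
  have hTp : T p = 0 := by
    have he : (Submodule.orthogonalProjectionOnto E p : V) = p :=
      Submodule.starProjection_eq_self_iff.2 hpmem.1
    have hf : (Submodule.orthogonalProjectionOnto F p : V) = p :=
      Submodule.starProjection_eq_self_iff.2 hpmem.2
    have : T p = (p - (Submodule.orthogonalProjectionOnto E p : V), p - (Submodule.orthogonalProjectionOnto F p : V)) := rfl
    rw [this, he, hf, sub_self]; rfl
  have hSval : S ⟨x - p, hwmem⟩ = T x := by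
    have : S ⟨x - p, hwmem⟩ = T (x - p) := rfl
    rw [this, map_sub, hTp, sub_zero]
  -- norm of T x
  have h3 : ‖T x‖ ≤ Metric.infDist x (E : Set V) + Metric.infDist x (F : Set V) := by
    have hTx : T x = (PE x, PF x) := rfl
    calc ‖T x‖ ≤ ‖PE x‖ + ‖PF x‖ := by
          rw [hTx, Prod.norm_def]
          exact max_le (le_add_of_nonneg_right (norm_nonneg _))
            (le_add_of_nonneg_left (norm_nonneg _))
      _ ≤ _ := by
          rw [hPEapp, hPFapp]
          exact add_le_add (proj_dist_le E x) (proj_dist_le F x)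
  calc Metric.infDist x ((E ⊓ F : Submodule ℝ V) : Set V) ≤ ‖x - p‖ := h1
    _ ≤ (K : ℝ) * ‖S ⟨x - p, hwmem⟩‖ := h2
    _ = (K : ℝ) * ‖T x‖ := by rw [hSval]
    _ ≤ (K : ℝ) * (Metric.infDist x (E : Set V) + Metric.infDist x (F : Set V)) := by
        exact mul_le_mul_of_nonneg_left h3 (by positivity)
end

section
/- Let E and F be linear subspaces of ℝ^d and set m := dim(E ∩ F). For every α ∈ (0,1) there exists a constant C > 0 (depending on E, F, d, α) such that for every real L ≥ 1, the Lebesgue measure of the set { x ∈ ℝ^d : ‖x‖ ≤ L, dist(x, E) ≤ L^α and dist(x, F) ≤ L^α } is at most C · L^{m + α(d−m)}. -/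
open MeasureTheory

section aux
variable {H : Type*} [NormedAddCommGroup H] [InnerProductSpace ℝ H] [FiniteDimensional ℝ H]

lemma infDist_submodule (K : Submodule ℝ H) (x : H) :
    Metric.infDist x (K : Set H) = ‖x - (K.orthogonalProjection x : H)‖ := by
  rw [Metric.infDist_eq_iInf]
  simp only [dist_eq_norm]
  exact (Submodule.starProjection_minimal x).symm

lemma dist_inf_le {d : ℕ} (E F : Submodule ℝ (EuclideanSpace ℝ (Fin d))) :
    ∃ C > (0:ℝ), ∀ x : EuclideanSpace ℝ (Fin d),
      Metric.infDist x ((E ⊓ F : Submodule ℝ _) : Set (EuclideanSpace ℝ (Fin d)))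
        ≤ C * (Metric.infDist x (E : Set (EuclideanSpace ℝ (Fin d)))
             + Metric.infDist x (F : Set (EuclideanSpace ℝ (Fin d)))) := by
  set H' := EuclideanSpace ℝ (Fin d)
  set G : Submodule ℝ H' := E ⊓ F with hG
  let TE : H' →ₗ[ℝ] H' := LinearMap.id - E.subtype ∘ₗ (E.orthogonalProjection).toLinearMap
  let TF : H' →ₗ[ℝ] H' := LinearMap.id - F.subtype ∘ₗ (F.orthogonalProjection).toLinearMap
  have hTE : ∀ x, TE x = x - (E.orthogonalProjection x : H') := fun x => rfl
  have hTF : ∀ x, TF x = x - (F.orthogonalProjection x : H') := fun x => rfl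
  let T : H' →ₗ[ℝ] H' × H' := TE.prod TF
  let T' : Gᗮ →ₗ[ℝ] H' × H' := T ∘ₗ Gᗮ.subtype
  have hker : LinearMap.ker T' = ⊥ := by
    rw [LinearMap.ker_eq_bot']
    rintro ⟨y, hy⟩ h
    have h1 : TE y = 0 := congrArg Prod.fst h
    have h2 : TF y = 0 := congrArg Prod.snd h
    rw [hTE, sub_eq_zero] at h1
    rw [hTF, sub_eq_zero] at h2
    have hyE : y ∈ E := Submodule.starProjection_eq_self_iff.mp h1.symm
    have hyF : y ∈ F := Submodule.starProjection_eq_self_iff.mp h2.symm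
    have hyG : y ∈ G := Submodule.mem_inf.mpr ⟨hyE, hyF⟩
    have : y = 0 := by
      have := (Submodule.orthogonal_disjoint G).le_bot
        (Submodule.mem_inf.mpr ⟨hyG, hy⟩ : y ∈ G ⊓ Gᗮ)
      simpa using this
    exact Subtype.ext this
  obtain ⟨K, K0, hK⟩ := T'.exists_antilipschitzWith hker
  refine ⟨K, by exact_mod_cast K0, fun x => ?_⟩
  set y : Gᗮ := ⟨x - (G.orthogonalProjection x : H'),
    Submodule.sub_starProjection_mem_orthogonal (K := G) x⟩ with hy
  have hny : ‖(y : H')‖ ≤ K * ‖T' y‖ := by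
    have h := hK.le_mul_dist y 0
    simp only [dist_zero_right, map_zero] at h
    exact h
  have hTy : T' y = T x := by
    have hmemE : (G.orthogonalProjection x : H') ∈ E :=
      (inf_le_left : G ≤ E) (G.orthogonalProjection x).2
    have hmemF : (G.orthogonalProjection x : H') ∈ F :=
      (inf_le_right : G ≤ F) (G.orthogonalProjection x).2
    have : T (x - (G.orthogonalProjection x : H')) = T x - T (G.orthogonalProjection x : H') :=
      map_sub _ _ _
    have hTproj : T (G.orthogonalProjection x : H') = 0 := by
      have e1 : TE (G.orthogonalProjection x : H') = 0 := by
        rw [hTE, sub_eq_zero]; exact (Submodule.starProjection_eq_self_iff.mpr hmemE).symm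
      have e2 : TF (G.orthogonalProjection x : H') = 0 := by
        rw [hTF, sub_eq_zero]; exact (Submodule.starProjection_eq_self_iff.mpr hmemF).symm
      exact Prod.ext e1 e2
    show T (x - (G.orthogonalProjection x : H')) = T x
    rw [this, hTproj, sub_zero]
  have hnormT : ‖T x‖ ≤ Metric.infDist x (E : Set H') + Metric.infDist x (F : Set H') := by
    have h1 : ‖TE x‖ = Metric.infDist x (E : Set H') := by rw [hTE, infDist_submodule]
    have h2 : ‖TF x‖ = Metric.infDist x (F : Set H') := by rw [hTF, infDist_submodule]
    have : ‖T x‖ = max ‖TE x‖ ‖TF x‖ := rfl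
    rw [this, h1, h2]
    exact max_le (le_add_of_nonneg_right (Metric.infDist_nonneg))
      (le_add_of_nonneg_left (Metric.infDist_nonneg))
  calc Metric.infDist x (G : Set H') = ‖(y : H')‖ := infDist_submodule G x
    _ ≤ K * ‖T' y‖ := hny
    _ = K * ‖T x‖ := by rw [hTy]
    _ ≤ K * (Metric.infDist x (E : Set H') + Metric.infDist x (F : Set H')) := by
        exact mul_le_mul_of_nonneg_left hnormT (by positivity)

end aux


lemma volume_box {d : ℕ} (r : Fin d → ℝ) :
    volume {y : EuclideanSpace ℝ (Fin d) | ∀ i, |y i| ≤ r i}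
      = ∏ i, ENNReal.ofReal (2 * r i) := by
  have hset : {y : EuclideanSpace ℝ (Fin d) | ∀ i, |y i| ≤ r i}
      = (MeasurableEquiv.toLp 2 (Fin d → ℝ)).symm ⁻¹'
        (Set.pi Set.univ fun i => Set.Icc (-(r i)) (r i)) := by
    ext y
    simp [MeasurableEquiv.coe_toLp_symm, Set.mem_pi, abs_le, Pi.le_def, forall_and,
      MeasurableEquiv.toLp_symm_apply]
  rw [hset, (EuclideanSpace.volume_preserving_symm_measurableEquiv_toLp (Fin d)).measure_preimage
    (MeasurableSet.univ_pi fun i => measurableSet_Icc).nullMeasurableSet]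
  rw [volume_pi_pi]
  congr 1
  ext i
  rw [Real.volume_Icc]
  ring_nf

lemma box_meas {d : ℕ} (r : Fin d → ℝ) :
    MeasurableSet {y : EuclideanSpace ℝ (Fin d) | ∀ i, |y i| ≤ r i} := by
  have hset : {y : EuclideanSpace ℝ (Fin d) | ∀ i, |y i| ≤ r i}
      = (MeasurableEquiv.toLp 2 (Fin d → ℝ)).symm ⁻¹'
        (Set.pi Set.univ fun i => Set.Icc (-(r i)) (r i)) := by
    ext y
    simp [MeasurableEquiv.coe_toLp_symm, Set.mem_pi, abs_le, Pi.le_def, forall_and,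
      MeasurableEquiv.toLp_symm_apply]
  rw [hset]
  exact (MeasurableEquiv.toLp 2 (Fin d → ℝ)).symm.measurable
    (MeasurableSet.univ_pi fun i => measurableSet_Icc)

theorem stmt8 (d : ℕ) (E F : Submodule ℝ (EuclideanSpace ℝ (Fin d))) (m : ℕ)
    (hm : Module.finrank ℝ (E ⊓ F : Submodule ℝ (EuclideanSpace ℝ (Fin d))) = m)
    (α : ℝ) (hα : α ∈ Set.Ioo (0 : ℝ) 1) :
    ∃ C > (0 : ℝ), ∀ L : ℝ, 1 ≤ L →
      volume {x : EuclideanSpace ℝ (Fin d) |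
          ‖x‖ ≤ L ∧ Metric.infDist x (E : Set (EuclideanSpace ℝ (Fin d))) ≤ L ^ α ∧
            Metric.infDist x (F : Set (EuclideanSpace ℝ (Fin d))) ≤ L ^ α}
        ≤ ENNReal.ofReal (C * L ^ ((m : ℝ) + α * ((d : ℝ) - m))) := by
  obtain ⟨K, hK0, hKc⟩ := dist_inf_le E F
  set G : Submodule ℝ (EuclideanSpace ℝ (Fin d)) := E ⊓ F with hGdef
  have hmd : m ≤ d := by
    rw [← hm]
    simpa using Submodule.finrank_le G
  -- adapted orthonormal basis
  let gb : OrthonormalBasis (Fin m) ℝ G := (stdOrthonormalBasis ℝ G).reindex (finCongr hm)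
  let v : Fin d → EuclideanSpace ℝ (Fin d) :=
    fun i => if h : (i : ℕ) < m then (gb ⟨i, h⟩ : EuclideanSpace ℝ (Fin d)) else 0
  have hcard : Module.finrank ℝ (EuclideanSpace ℝ (Fin d)) = Fintype.card (Fin d) := by simp
  have honv : Orthonormal ℝ (({i : Fin d | (i : ℕ) < m}).restrict v) := by
    rw [orthonormal_iff_ite]
    rintro ⟨i, hi⟩ ⟨j, hj⟩
    have hi' : (i : ℕ) < m := hi
    have hj' : (j : ℕ) < m := hj
    simp only [Set.restrict_apply, v]
    show inner ℝ (v i) (v j) = _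
    simp only [v, dif_pos hi', dif_pos hj']
    have hgb := orthonormal_iff_ite.mp gb.orthonormal ⟨i, hi'⟩ ⟨j, hj'⟩
    rw [Submodule.coe_inner] at hgb
    rw [hgb]
    exact if_congr (by simp [Fin.ext_iff, Subtype.ext_iff]) rfl rfl
  obtain ⟨b, hb⟩ := honv.exists_orthonormalBasis_extension_of_card_eq hcard
  have hbGo : ∀ i : Fin d, ¬((i : ℕ) < m) → b i ∈ Gᗮ := by
    intro i hi
    rw [Submodule.mem_orthogonal]
    intro u hu
    have hsum := gb.sum_repr ⟨u, hu⟩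
    have hcoe : u = ∑ j : Fin m, gb.repr ⟨u, hu⟩ j • ((gb j : G) : EuclideanSpace ℝ (Fin d)) := by
      conv_lhs => rw [show u = ((⟨u, hu⟩ : G) : EuclideanSpace ℝ (Fin d)) from rfl, ← hsum]
      push_cast
      rfl
    rw [hcoe, sum_inner]
    refine Finset.sum_eq_zero fun j _ => ?_
    rw [real_inner_smul_left]
    have hjd : ((⟨j.1, lt_of_lt_of_le j.2 hmd⟩ : Fin d) : ℕ) < m := j.2
    have hbj : ((gb j : G) : EuclideanSpace ℝ (Fin d)) = b ⟨j.1, lt_of_lt_of_le j.2 hmd⟩ := by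
      rw [hb _ hjd]
      simp only [v, dif_pos hjd]
    have hne : (⟨j.1, lt_of_lt_of_le j.2 hmd⟩ : Fin d) ≠ i := by
      intro h
      exact hi (h ▸ hjd)
    rw [hbj, b.orthonormal.2 hne, mul_zero]
  obtain ⟨hα0, hα1⟩ := hα
  refine ⟨2 ^ m * (4 * K) ^ (d - m), by positivity, fun L hL => ?_⟩
  have hL0 : (0 : ℝ) < L := lt_of_lt_of_le one_pos hL
  have hLα0 : (0 : ℝ) < L ^ α := Real.rpow_pos_of_pos hL0 α
  set r : Fin d → ℝ := fun i => if (i : ℕ) < m then L else 2 * K * L ^ α with hr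
  have hsub : {x : EuclideanSpace ℝ (Fin d) |
          ‖x‖ ≤ L ∧ Metric.infDist x (E : Set (EuclideanSpace ℝ (Fin d))) ≤ L ^ α ∧
            Metric.infDist x (F : Set (EuclideanSpace ℝ (Fin d))) ≤ L ^ α}
      ⊆ b.repr ⁻¹' {y : EuclideanSpace ℝ (Fin d) | ∀ i, |y i| ≤ r i} := by
    rintro x ⟨hxL, hxE, hxF⟩
    intro i
    rw [b.repr_apply_apply]
    by_cases hi : (i : ℕ) < m
    · simp only [hr, if_pos hi]
      calc |(inner ℝ (b i) x : ℝ)| ≤ ‖b i‖ * ‖x‖ := abs_real_inner_le_norm _ _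
        _ = ‖x‖ := by rw [b.orthonormal.1 i, one_mul]
        _ ≤ L := hxL
    · simp only [hr, if_neg hi]
      have hbo := hbGo i hi
      have hzero : (inner ℝ (b i) ((G.orthogonalProjection x : EuclideanSpace ℝ (Fin d))) : ℝ) = 0 :=
        (Submodule.mem_orthogonal' G (b i)).mp hbo _ (G.orthogonalProjection x).2
      have hsplit : (inner ℝ (b i) x : ℝ)
          = inner ℝ (b i) (x - (G.orthogonalProjection x : EuclideanSpace ℝ (Fin d))) := by
        rw [inner_sub_right, hzero, sub_zero]
      calc |(inner ℝ (b i) x : ℝ)|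
          = |(inner ℝ (b i) (x - (G.orthogonalProjection x : EuclideanSpace ℝ (Fin d))) : ℝ)| := by
            rw [hsplit]
        _ ≤ ‖b i‖ * ‖x - (G.orthogonalProjection x : EuclideanSpace ℝ (Fin d))‖ :=
            abs_real_inner_le_norm _ _
        _ = Metric.infDist x (G : Set (EuclideanSpace ℝ (Fin d))) := by
            rw [b.orthonormal.1 i, one_mul, ← infDist_submodule]
        _ ≤ K * (L ^ α + L ^ α) :=
            le_trans (hKc x) (mul_le_mul_of_nonneg_left (add_le_add hxE hxF) hK0.le)
        _ = 2 * K * L ^ α := by ring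
  have hprod : ∏ i : Fin d, (2 * r i) = (2 ^ m * (4 * K) ^ (d - m)) * L ^ ((m : ℝ) + α * ((d : ℝ) - m)) := by
    have h1 : ∏ i : Fin d, (2 * r i)
        = ∏ k ∈ Finset.range d, (2 * (if k < m then L else 2 * K * L ^ α)) := by
      exact Fin.prod_univ_eq_prod_range (fun k => 2 * (if k < m then L else 2 * K * L ^ α)) d
    rw [h1, Finset.range_eq_Ico, ← Finset.prod_Ico_consecutive _ (Nat.zero_le m) hmd]
    have h2 : ∏ k ∈ Finset.Ico 0 m, (2 * (if k < m then L else 2 * K * L ^ α)) = (2 * L) ^ m := by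
      rw [Finset.prod_congr rfl fun k hk => by
        rw [if_pos (Finset.mem_Ico.mp hk).2]]
      rw [Finset.prod_const, Nat.card_Ico, Nat.sub_zero]
    have h3 : ∏ k ∈ Finset.Ico m d, (2 * (if k < m then L else 2 * K * L ^ α))
        = (2 * (2 * K * L ^ α)) ^ (d - m) := by
      rw [Finset.prod_congr rfl fun k hk => by
        rw [if_neg (not_lt.mpr (Finset.mem_Ico.mp hk).1)]]
      rw [Finset.prod_const, Nat.card_Ico]
    rw [h2, h3]
    have hkey : L ^ m * (L ^ α) ^ (d - m) = L ^ ((m : ℝ) + α * ((d : ℝ) - m)) := by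
      rw [← Real.rpow_natCast L m, ← Real.rpow_natCast (L ^ α) (d - m),
        ← Real.rpow_mul hL0.le, ← Real.rpow_add hL0, Nat.cast_sub hmd]
    calc (2 * L) ^ m * (2 * (2 * K * L ^ α)) ^ (d - m)
        = (2 ^ m * (4 * K) ^ (d - m)) * (L ^ m * (L ^ α) ^ (d - m)) := by ring
      _ = (2 ^ m * (4 * K) ^ (d - m)) * L ^ ((m : ℝ) + α * ((d : ℝ) - m)) := by rw [hkey]
  calc volume {x : EuclideanSpace ℝ (Fin d) |
          ‖x‖ ≤ L ∧ Metric.infDist x (E : Set (EuclideanSpace ℝ (Fin d))) ≤ L ^ α ∧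
            Metric.infDist x (F : Set (EuclideanSpace ℝ (Fin d))) ≤ L ^ α}
      ≤ volume (b.repr ⁻¹' {y : EuclideanSpace ℝ (Fin d) | ∀ i, |y i| ≤ r i}) :=
        measure_mono hsub
    _ = volume {y : EuclideanSpace ℝ (Fin d) | ∀ i, |y i| ≤ r i} :=
        b.measurePreserving_repr.measure_preimage (box_meas r).nullMeasurableSet
    _ = ∏ i, ENNReal.ofReal (2 * r i) := volume_box r
    _ = ENNReal.ofReal (∏ i : Fin d, (2 * r i)) := by
        rw [ENNReal.ofReal_prod_of_nonneg]
        intro i _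
        simp only [hr]
        split <;> positivity
    _ ≤ ENNReal.ofReal ((2 ^ m * (4 * K) ^ (d - m)) * L ^ ((m : ℝ) + α * ((d : ℝ) - m))) := by
        rw [hprod]
end

section
/- Let β > 0 and γ > 0. There exists a constant K > 0 such that for every real s ≠ 0 and every real J ≥ 0 one has ∫₀^∞ t · e^{−βt} · e^{−γ J · arctan(t/|s|)} dt ≤ K · (1 + s²) / (1 + J²). -/
open MeasureTheory

lemma aux_integrable (b : ℝ) (hb : 0 < b) :
    IntegrableOn (fun t : ℝ => t * Real.exp (-(b * t))) (Set.Ioi 0) := by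
  have h := integrableOn_rpow_mul_exp_neg_mul_rpow (s := 1) (p := 1) (by norm_num) one_pos hb
  simpa [Real.rpow_one, neg_mul] using h

lemma aux_integral (b : ℝ) (hb : 0 < b) :
    ∫ t in Set.Ioi (0:ℝ), t * Real.exp (-(b * t)) = 1 / b ^ 2 := by
  have h := Real.integral_rpow_mul_exp_neg_mul_Ioi (a := 2) (r := b) (by norm_num) hb
  rw [show (2:ℝ) - 1 = 1 by norm_num] at h
  simp only [Real.rpow_one] at h
  rw [h, Real.Gamma_two, mul_one, Real.rpow_two, one_div, one_div, ← inv_pow]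

lemma aux_arctan_half {x : ℝ} (h0 : 0 ≤ x) (h1 : x ≤ 1) : x / 2 ≤ Real.arctan x := by
  have hpi : (2:ℝ) < Real.pi := by linarith [Real.pi_gt_three]
  have hc : Real.cos (x / 2) ≥ 1 / 2 := by
    have := Real.one_sub_sq_div_two_le_cos (x := x / 2)
    nlinarith
  have hs : Real.sin (x / 2) ≤ x / 2 := Real.sin_le (by linarith)
  have htan : Real.tan (x / 2) ≤ x := by
    rw [Real.tan_eq_sin_div_cos, div_le_iff₀ (by linarith)]
    have hsn : 0 ≤ Real.sin (x/2) :=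
      Real.sin_nonneg_of_nonneg_of_le_pi (by linarith) (by linarith)
    nlinarith
  calc x / 2 = Real.arctan (Real.tan (x / 2)) :=
        (Real.arctan_tan (by linarith) (by linarith)).symm
    _ ≤ Real.arctan x := Real.arctan_strictMono.monotone htan

lemma aux_arctan_pi4 {x : ℝ} (h1 : 1 ≤ x) : Real.pi / 4 ≤ Real.arctan x := by
  rw [← Real.arctan_one]; exact Real.arctan_strictMono.monotone h1

lemma aux_exp_sq {x : ℝ} (hx : 0 ≤ x) : x ^ 2 / 4 ≤ Real.exp x := by
  have h := Real.add_one_le_exp (x / 2)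
  have h2 : Real.exp x = Real.exp (x / 2) ^ 2 := by
    rw [sq, ← Real.exp_add]; ring_nf
  nlinarith [Real.exp_pos (x/2)]

set_option maxHeartbeats 2000000 in
theorem stmt11 (β γ : ℝ) (hβ : 0 < β) (hγ : 0 < γ) :
    ∃ K > (0 : ℝ), ∀ s : ℝ, s ≠ 0 → ∀ J : ℝ, 0 ≤ J →
      (∫ t in Set.Ioi (0 : ℝ),
          t * Real.exp (-β * t) * Real.exp (-γ * J * Real.arctan (t / |s|)))
        ≤ K * (1 + s ^ 2) / (1 + J ^ 2) := by
  have hπ : (0:ℝ) < Real.pi := Real.pi_pos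
  obtain ⟨a, ha⟩ : ∃ a : ℝ, a = γ * Real.pi / 4 := ⟨_, rfl⟩
  have hapos : 0 < a := by rw [ha]; positivity
  obtain ⟨K, hK⟩ : ∃ K : ℝ, K = 2 / β ^ 2 + 8 / γ ^ 2 + (1 + 4 / a ^ 2) / β ^ 2 := ⟨_, rfl⟩
  have hKpos : 0 < K := by rw [hK]; positivity
  have hKA : 2 / β ^ 2 ≤ K := by
    have : (0:ℝ) < 8 / γ ^ 2 := by positivity
    have : (0:ℝ) < (1 + 4 / a ^ 2) / β ^ 2 := by positivity
    rw [hK]; linarith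
  have hKB : 8 / γ ^ 2 + (1 + 4 / a ^ 2) / β ^ 2 ≤ K := by
    have : (0:ℝ) < 2 / β ^ 2 := by positivity
    rw [hK]; linarith
  refine ⟨K, hKpos, ?_⟩
  intro s hs J hJ
  have hsabs : 0 < |s| := abs_pos.mpr hs
  have hf0 : ∀ᵐ t ∂(volume.restrict (Set.Ioi (0:ℝ))),
      0 ≤ t * Real.exp (-β * t) * Real.exp (-γ * J * Real.arctan (t / |s|)) := by
    filter_upwards [ae_restrict_mem measurableSet_Ioi] with t ht
    have : (0:ℝ) < t := ht
    positivity
  rcases le_or_gt J 1 with hJ1 | hJ1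
  · -- small J : trivial bound
    have hfg : ∀ᵐ t ∂(volume.restrict (Set.Ioi (0:ℝ))),
        t * Real.exp (-β * t) * Real.exp (-γ * J * Real.arctan (t / |s|))
          ≤ t * Real.exp (-(β * t)) := by
      filter_upwards [ae_restrict_mem measurableSet_Ioi] with t ht
      have ht0 : (0:ℝ) < t := ht
      have hat : 0 ≤ Real.arctan (t / |s|) := by
        rw [← Real.arctan_zero]
        exact Real.arctan_strictMono.monotone (by positivity)
      have hE : Real.exp (-γ * J * Real.arctan (t / |s|)) ≤ 1 := by
        rw [Real.exp_le_one_iff]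
        have : 0 ≤ γ * J * Real.arctan (t / |s|) := by positivity
        linarith
      calc t * Real.exp (-β * t) * Real.exp (-γ * J * Real.arctan (t / |s|))
          ≤ t * Real.exp (-β * t) * 1 := by
            have : 0 ≤ t * Real.exp (-β * t) := by positivity
            exact mul_le_mul_of_nonneg_left hE this
        _ = t * Real.exp (-(β * t)) := by rw [mul_one, neg_mul]
    have hle : (∫ t in Set.Ioi (0 : ℝ),
          t * Real.exp (-β * t) * Real.exp (-γ * J * Real.arctan (t / |s|)))
        ≤ 1 / β ^ 2 := by
      rw [← aux_integral β hβ]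
      exact integral_mono_of_nonneg hf0 (aux_integrable β hβ) hfg
    refine hle.trans ?_
    rw [mul_div_assoc]
    have h12 : (1:ℝ)/2 ≤ (1 + s ^ 2) / (1 + J ^ 2) := by
      rw [div_le_div_iff₀ (by norm_num) (by positivity)]
      nlinarith [sq_nonneg s, sq_nonneg J]
    calc 1 / β ^ 2 = (2 / β ^ 2) * (1/2) := by ring
      _ ≤ K * ((1 + s ^ 2) / (1 + J ^ 2)) :=
        mul_le_mul hKA h12 (by norm_num) hKpos.le
  · -- large J : split majorant
    obtain ⟨c, hc⟩ : ∃ c : ℝ, c = γ * J / (2 * |s|) := ⟨_, rfl⟩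
    have hJ0 : (0:ℝ) < J := lt_trans one_pos hJ1
    have hcpos : 0 < c := by rw [hc]; positivity
    obtain ⟨g, hg⟩ : ∃ g : ℝ → ℝ, g = fun t =>
        t * Real.exp (-(c * t)) + Real.exp (-(a * J)) * (t * Real.exp (-(β * t))) := ⟨_, rfl⟩
    have hgint : IntegrableOn g (Set.Ioi (0:ℝ)) := by
      rw [hg]
      exact (aux_integrable c hcpos).add ((aux_integrable β hβ).const_mul _)
    have hfg : ∀ᵐ t ∂(volume.restrict (Set.Ioi (0:ℝ))),
        t * Real.exp (-β * t) * Real.exp (-γ * J * Real.arctan (t / |s|)) ≤ g t := by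
      simp only [hg]
      filter_upwards [ae_restrict_mem measurableSet_Ioi] with t ht
      have ht0 : (0:ℝ) < t := ht
      rcases le_or_gt t |s| with hts | hts
      · -- inner region
        have hx0 : 0 ≤ t / |s| := by positivity
        have hx1 : t / |s| ≤ 1 := (div_le_one hsabs).mpr hts
        have har : t / |s| / 2 ≤ Real.arctan (t / |s|) := aux_arctan_half hx0 hx1
        have hE : Real.exp (-γ * J * Real.arctan (t / |s|)) ≤ Real.exp (-(c * t)) := by
          apply Real.exp_le_exp.mpr
          have h1 : γ * J * (t / |s| / 2) ≤ γ * J * Real.arctan (t / |s|) :=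
            mul_le_mul_of_nonneg_left har (by positivity)
          have h2 : c * t = γ * J * (t / |s| / 2) := by
            rw [hc]; field_simp
          rw [h2]
          linarith
        have he1 : Real.exp (-β * t) ≤ 1 := by
          rw [Real.exp_le_one_iff]; nlinarith
        have hmain : t * Real.exp (-β * t) * Real.exp (-γ * J * Real.arctan (t / |s|))
            ≤ t * Real.exp (-(c * t)) := by
          calc t * Real.exp (-β * t) * Real.exp (-γ * J * Real.arctan (t / |s|))
              ≤ t * 1 * Real.exp (-(c * t)) := by
                apply mul_le_mul (mul_le_mul_of_nonneg_left he1 ht0.le) hE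
                  (Real.exp_pos _).le (by positivity)
            _ = t * Real.exp (-(c * t)) := by rw [mul_one]
        refine hmain.trans ?_
        have : 0 ≤ Real.exp (-(a * J)) * (t * Real.exp (-(β * t))) := by positivity
        linarith
      · -- outer region
        have hx1 : (1:ℝ) ≤ t / |s| := (le_div_iff₀ hsabs).mpr (by linarith)
        have har : Real.pi / 4 ≤ Real.arctan (t / |s|) := aux_arctan_pi4 hx1
        have hE : Real.exp (-γ * J * Real.arctan (t / |s|)) ≤ Real.exp (-(a * J)) := by
          apply Real.exp_le_exp.mpr
          have h1 : γ * J * (Real.pi / 4) ≤ γ * J * Real.arctan (t / |s|) :=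
            mul_le_mul_of_nonneg_left har (by positivity)
          have h2 : a * J = γ * J * (Real.pi / 4) := by rw [ha]; ring
          rw [h2]; linarith
        have hmain : t * Real.exp (-β * t) * Real.exp (-γ * J * Real.arctan (t / |s|))
            ≤ Real.exp (-(a * J)) * (t * Real.exp (-(β * t))) := by
          have h3 : t * Real.exp (-β * t) * Real.exp (-γ * J * Real.arctan (t / |s|))
              ≤ t * Real.exp (-β * t) * Real.exp (-(a * J)) :=
            mul_le_mul_of_nonneg_left hE (by positivity)
          refine h3.trans_eq ?_
          rw [neg_mul]; ring
        refine hmain.trans ?_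
        have : 0 ≤ t * Real.exp (-(c * t)) := by positivity
        linarith
    have hle : (∫ t in Set.Ioi (0 : ℝ),
          t * Real.exp (-β * t) * Real.exp (-γ * J * Real.arctan (t / |s|)))
        ≤ ∫ t in Set.Ioi (0:ℝ), g t :=
      integral_mono_of_nonneg hf0 hgint hfg
    have hgeq : (∫ t in Set.Ioi (0:ℝ), g t)
        = 1 / c ^ 2 + Real.exp (-(a * J)) * (1 / β ^ 2) := by
      rw [hg]
      rw [integral_add (aux_integrable c hcpos) ((aux_integrable β hβ).const_mul _)]
      rw [integral_const_mul, aux_integral c hcpos, aux_integral β hβ]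
    -- bound the two pieces
    have hs2 : (0:ℝ) < s ^ 2 := by positivity
    have hb1 : 1 / c ^ 2 ≤ 8 / γ ^ 2 * ((1 + s ^ 2) / (1 + J ^ 2)) := by
      have hceq : 1 / c ^ 2 = 4 * s ^ 2 / (γ ^ 2 * J ^ 2) := by
        rw [hc, div_pow, one_div_div, mul_pow, mul_pow, sq_abs]
        norm_num
      have hrhs : 8 / γ ^ 2 * ((1 + s ^ 2) / (1 + J ^ 2))
          = 8 * (1 + s ^ 2) / (γ ^ 2 * (1 + J ^ 2)) := div_mul_div_comm 8 (γ ^ 2) _ _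
      have hJsq : (1:ℝ) ≤ J ^ 2 := by nlinarith
      rw [hceq, hrhs, div_le_div_iff₀ (by positivity) (by positivity)]
      linarith [mul_nonneg (mul_nonneg (sq_nonneg γ) hs2.le) (sub_nonneg.mpr hJsq),
        mul_pos (mul_pos (mul_pos hγ hγ) hJ0) hJ0]
    have hb2 : Real.exp (-(a * J)) * (1 / β ^ 2)
        ≤ (1 + 4 / a ^ 2) / β ^ 2 * ((1 + s ^ 2) / (1 + J ^ 2)) := by
      have ha2 : (0:ℝ) < a ^ 2 := pow_pos hapos 2
      have hu : (0:ℝ) < 4 / a ^ 2 := div_pos (by norm_num) ha2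
      have haJ : (0:ℝ) ≤ a * J := mul_nonneg hapos.le hJ
      have hkey : (1 + J ^ 2) * Real.exp (-(a * J)) ≤ 1 + 4 / a ^ 2 := by
        have h1 : 1 ≤ Real.exp (a * J) := Real.one_le_exp haJ
        have h2 : (a * J) ^ 2 / 4 ≤ Real.exp (a * J) := aux_exp_sq haJ
        have h5 := mul_le_mul_of_nonneg_left h2 hu.le
        have h4 : (4 / a ^ 2) * ((a * J) ^ 2 / 4) = J ^ 2 := by
          field_simp
        rw [h4] at h5
        have h3 : 1 + J ^ 2 ≤ (1 + 4 / a ^ 2) * Real.exp (a * J) := by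
          rw [add_mul, one_mul]; linarith
        rw [Real.exp_neg, mul_inv_le_iff₀ (Real.exp_pos _)]
        linarith [h3]
      have hEb : Real.exp (-(a * J)) ≤ (1 + 4 / a ^ 2) / (1 + J ^ 2) := by
        rw [le_div_iff₀ (by positivity)]
        calc Real.exp (-(a * J)) * (1 + J ^ 2) = (1 + J ^ 2) * Real.exp (-(a * J)) := by ring
          _ ≤ 1 + 4 / a ^ 2 := hkey
      calc Real.exp (-(a * J)) * (1 / β ^ 2)
          ≤ (1 + 4 / a ^ 2) / (1 + J ^ 2) * (1 / β ^ 2) := by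
            apply mul_le_mul_of_nonneg_right hEb (by positivity)
        _ = (1 + 4 / a ^ 2) / β ^ 2 * (1 / (1 + J ^ 2)) := by ring
        _ ≤ (1 + 4 / a ^ 2) / β ^ 2 * ((1 + s ^ 2) / (1 + J ^ 2)) := by
            refine mul_le_mul_of_nonneg_left ?_ ?_
            · exact (div_le_div_iff_of_pos_right (by positivity)).mpr (by nlinarith [sq_nonneg s])
            · exact le_of_lt (div_pos (by linarith) (pow_pos hβ 2))
    -- combine
    refine hle.trans ?_
    rw [hgeq, mul_div_assoc]
    calc 1 / c ^ 2 + Real.exp (-(a * J)) * (1 / β ^ 2)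
        ≤ 8 / γ ^ 2 * ((1 + s ^ 2) / (1 + J ^ 2))
            + (1 + 4 / a ^ 2) / β ^ 2 * ((1 + s ^ 2) / (1 + J ^ 2)) := add_le_add hb1 hb2
      _ = (8 / γ ^ 2 + (1 + 4 / a ^ 2) / β ^ 2) * ((1 + s ^ 2) / (1 + J ^ 2)) := by ring
      _ ≤ K * ((1 + s ^ 2) / (1 + J ^ 2)) :=
        mul_le_mul_of_nonneg_right hKB (by positivity)
end
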